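/- Let T ⊆ X be a subset of the vertex set of a finite tree on X, with |T| even. For an edge x∼y of the tree, deleting it partitions X into X_x and X_y; call the edge T-odd if |T ∩ X_x| is odd. Then the set of T-odd edges of the tree is a T-join, i.e., a vertex z ∈ X is incident to an odd number of T-odd edges if and only if z ∈ T. -/

import Mathlib

open scoped Classical

/-- The vertex set of the component of `x` after deleting the edge `x∼y` from the graph `G`. -/
def sideSet {X : Type*} (G : SimpleGraph X) (x y : X) : Set X :=
  {z | (G.deleteEdges {s(x, y)}).Reachable x z}

section Aux

variable {X : Type*}

private lemma side_not_reach {G : SimpleGraph X} (hG : G.IsAcyclic) {z y : X} (h : G.Adj z y) :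
    ¬ (G.deleteEdges {s(z, y)}).Reachable z y :=
  (SimpleGraph.isBridge_iff.mp (SimpleGraph.isAcyclic_iff_forall_adj_isBridge.mp hG h))

private lemma side_cover_aux {G : SimpleGraph X} {z y : X} :
    ∀ {a w : X} (_ : G.Walk a w),
      ((G.deleteEdges {s(z, y)}).Reachable z a ∨ (G.deleteEdges {s(z, y)}).Reachable y a) →
      ((G.deleteEdges {s(z, y)}).Reachable z w ∨ (G.deleteEdges {s(z, y)}).Reachable y w) := by
  intro a w p
  induction p with
  | nil => exact id
  | @cons a b w hab q ih =>
    intro h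
    apply ih
    by_cases he : s(a, b) = s(z, y)
    · rw [Sym2.eq_iff] at he
      rcases he with ⟨rfl, rfl⟩ | ⟨rfl, rfl⟩
      · exact Or.inr (SimpleGraph.Reachable.refl _)
      · exact Or.inl (SimpleGraph.Reachable.refl _)
    · have hadj : (G.deleteEdges {s(z, y)}).Adj a b := by
        simp only [SimpleGraph.deleteEdges_adj, Set.mem_singleton_iff]
        exact ⟨hab, he⟩
      rcases h with h | h
      · exact Or.inl (h.trans hadj.reachable)
      · exact Or.inr (h.trans hadj.reachable)

private lemma side_cover {G : SimpleGraph X} (hc : G.Connected) (z y w : X) :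
    (G.deleteEdges {s(z, y)}).Reachable z w ∨ (G.deleteEdges {s(z, y)}).Reachable y w := by
  obtain ⟨p⟩ := hc z w
  exact side_cover_aux p (Or.inl (SimpleGraph.Reachable.refl _))

private lemma mem_sideSet_iff {G : SimpleGraph X} {y z w : X} :
    w ∈ sideSet G y z ↔ (G.deleteEdges {s(z, y)}).Reachable y w := by
  unfold sideSet
  rw [Sym2.eq_swap]
  exact Iff.rfl

/-- Exclusivity: `w` is in the `y`-side iff it is not in the `z`-side. -/
private lemma side_mem_iff {G : SimpleGraph X} (hG : G.IsTree) {z y : X} (h : G.Adj z y)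
    (w : X) : w ∈ sideSet G y z ↔ w ∉ sideSet G z y := by
  have hb := side_not_reach hG.IsAcyclic h
  rw [mem_sideSet_iff]
  constructor
  · intro h1 h2
    exact hb (h2.trans h1.symm)
  · intro h2
    rcases side_cover hG.isConnected z y w with h1 | h1
    · exact absurd h1 h2
    · exact h1

/-- In a path starting at `z`, there is at most one edge incident to `z`. -/
private lemma path_unique_start {G : SimpleGraph X} {z w b c : X} (p : G.Walk z w)
    (hp : p.IsPath) (hb : s(z, b) ∈ p.edges) (hc : s(z, c) ∈ p.edges) : b = c := by
  cases p with
  | nil => simp at hb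
  | @cons _ a _ hza q =>
    rw [SimpleGraph.Walk.cons_isPath_iff] at hp
    have key : ∀ d : X, s(z, d) ∈ (SimpleGraph.Walk.cons hza q).edges → s(z, d) = s(z, a) := by
      intro d hd
      rw [SimpleGraph.Walk.edges_cons, List.mem_cons] at hd
      rcases hd with hd | hd
      · exact hd
      · exact absurd (q.fst_mem_support_of_mem_edges hd) hp.2
    have hb' := key b hb
    have hc' := key c hc
    rw [Sym2.eq_iff] at hb' hc'
    rcases hb' with ⟨_, rfl⟩ | ⟨h1, h2⟩ <;> rcases hc' with ⟨_, h3⟩ | ⟨h4, h5⟩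
    · exact h3.symm
    · rw [h5, ← h4]
    · rw [h2, h1, h3]
    · rw [h2, h5]

/-- Coverage: every `w ≠ z` lies in the side of some neighbor of `z`. -/
private lemma exists_side {G : SimpleGraph X} (hG : G.IsTree) {z w : X} (hw : w ≠ z) :
    ∃ y, G.Adj z y ∧ w ∈ sideSet G y z := by
  obtain ⟨p₀⟩ := hG.isConnected z w
  set p : G.Walk z w := p₀.toPath.val with hpdef
  have hp : p.IsPath := p₀.toPath.property
  cases hq : p with
  | nil => exact absurd rfl hw
  | @cons _ a _ hza q =>
    rw [hq, SimpleGraph.Walk.cons_isPath_iff] at hp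
    refine ⟨a, hza, ?_⟩
    rw [mem_sideSet_iff]
    have hqe : ∀ e ∈ q.edges, e ∉ ({s(z, a)} : Set (Sym2 X)) := by
      intro e he he'
      rw [Set.mem_singleton_iff] at he'
      subst he'
      exact hp.2 (q.fst_mem_support_of_mem_edges he)
    exact ⟨q.toDeleteEdges {s(z, a)} hqe⟩

private lemma not_self_mem_side {G : SimpleGraph X} (hG : G.IsTree) {z y : X}
    (h : G.Adj z y) : z ∉ sideSet G y z := by
  rw [mem_sideSet_iff]
  intro hr
  exact side_not_reach hG.IsAcyclic h hr.symm

/-- Disjointness of the sides of distinct neighbors. -/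
private lemma side_disjoint {G : SimpleGraph X} (hG : G.IsTree) {z y₁ y₂ : X}
    (h₁ : G.Adj z y₁) (h₂ : G.Adj z y₂) (hne : y₁ ≠ y₂) :
    Disjoint (sideSet G y₁ z) (sideSet G y₂ z) := by
  rw [Set.disjoint_left]
  intro w hw₁ hw₂
  have hz₁ : ¬ (G.deleteEdges {s(z, y₁)}).Reachable z w := (side_mem_iff hG h₁ w).mp hw₁
  have hz₂ : ¬ (G.deleteEdges {s(z, y₂)}).Reachable z w := (side_mem_iff hG h₂ w).mp hw₂
  obtain ⟨p₀⟩ := hG.isConnected z w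
  set p : G.Walk z w := p₀.toPath.val with hpdef
  have hp : p.IsPath := p₀.toPath.property
  have he₁ : s(z, y₁) ∈ p.edges := by
    by_contra hmem
    exact hz₁ ⟨p.toDeleteEdges {s(z, y₁)} (by
      intro e he he'
      rw [Set.mem_singleton_iff] at he'
      exact hmem (he' ▸ he))⟩
  have he₂ : s(z, y₂) ∈ p.edges := by
    by_contra hmem
    exact hz₂ ⟨p.toDeleteEdges {s(z, y₂)} (by
      intro e he he'
      rw [Set.mem_singleton_iff] at he'
      exact hmem (he' ▸ he))⟩
  exact hne (path_unique_start p hp he₁ he₂)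

end Aux

/-- In a finite tree on `X`, with `T ⊆ X` of even cardinality, the `T`-odd edges form a
`T`-join: a vertex `z` is incident to an odd number of `T`-odd tree edges iff `z ∈ T`. -/
theorem stmt_2 {X : Type*} [Fintype X] (G : SimpleGraph X) (hG : G.IsTree)
    (T : Set X) (hT : Even T.ncard) (z : X) :
    Odd {y | G.Adj z y ∧ Odd (T ∩ sideSet G z y).ncard}.ncard ↔ z ∈ T := by
  classical
  set N := G.neighborFinset z with hN
  -- parity flip: odd on the z-side iff odd on the y-side
  have hflip : ∀ y, G.Adj z y →
      (Odd (T ∩ sideSet G z y).ncard ↔ Odd (T ∩ sideSet G y z).ncard) := by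
    intro y hy
    have hdisj : Disjoint (T ∩ sideSet G z y) (T ∩ sideSet G y z) := by
      rw [Set.disjoint_left]
      rintro w ⟨_, hw1⟩ ⟨_, hw2⟩
      exact (side_mem_iff hG hy w).mp hw2 hw1
    have hunion : (T ∩ sideSet G z y) ∪ (T ∩ sideSet G y z) = T := by
      ext w
      constructor
      · rintro (⟨h, _⟩ | ⟨h, _⟩) <;> exact h
      · intro hw
        by_cases h : w ∈ sideSet G z y
        · exact Or.inl ⟨hw, h⟩
        · exact Or.inr ⟨hw, (side_mem_iff hG hy w).mpr h⟩
    have hsum : (T ∩ sideSet G z y).ncard + (T ∩ sideSet G y z).ncard = T.ncard := by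
      rw [← Set.ncard_union_eq hdisj (Set.toFinite _) (Set.toFinite _), hunion]
    rw [Nat.even_iff] at hT
    rw [Nat.odd_iff, Nat.odd_iff]
    omega
  -- the set in the statement as a filter over neighbors
  have hset : {y | G.Adj z y ∧ Odd (T ∩ sideSet G z y).ncard} =
      ↑(N.filter fun y => Odd ((T ∩ sideSet G y z).ncard)) := by
    ext y
    simp only [Set.mem_setOf_eq, Finset.coe_filter, Set.mem_setOf_eq, Finset.mem_filter,
      hN, SimpleGraph.mem_neighborFinset]
    constructor
    · rintro ⟨h1, h2⟩; exact ⟨h1, (hflip y h1).mp h2⟩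
    · rintro ⟨h1, h2⟩; exact ⟨h1, (hflip y h1).mpr h2⟩
  -- the decomposition of T \ {z}
  have hdecomp : (T \ {z}).toFinset = N.biUnion fun y => (T ∩ sideSet G y z).toFinset := by
    ext w
    simp only [Set.mem_toFinset, Set.mem_diff, Set.mem_singleton_iff, Finset.mem_biUnion,
      hN, SimpleGraph.mem_neighborFinset, Set.mem_inter_iff]
    constructor
    · rintro ⟨hwT, hwz⟩
      obtain ⟨y, hy, hside⟩ := exists_side hG hwz
      exact ⟨y, hy, hwT, hside⟩
    · rintro ⟨y, hy, hwT, hside⟩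
      refine ⟨hwT, fun h => ?_⟩
      subst h
      exact not_self_mem_side hG hy hside
  have hcard : (T \ {z}).ncard = ∑ y ∈ N, (T ∩ sideSet G y z).ncard := by
    rw [Set.ncard_eq_toFinset_card', hdecomp, Finset.card_biUnion]
    · refine Finset.sum_congr rfl fun y _ => ?_
      rw [← Set.ncard_eq_toFinset_card']
    · intro y₁ hy₁ y₂ hy₂ hne
      rw [Finset.mem_coe, SimpleGraph.mem_neighborFinset] at hy₁ hy₂
      have := side_disjoint hG hy₁ hy₂ hne
      rw [Function.onFun, Finset.disjoint_left]
      intro a ha₁ ha₂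
      rw [Set.mem_toFinset] at ha₁ ha₂
      exact (Set.disjoint_left.mp this ha₁.2) ha₂.2
  rw [hset, Set.ncard_coe_finset, ← Finset.odd_sum_iff_odd_card_odd, ← hcard]
  -- final parity argument
  constructor
  · intro hodd
    by_contra hz
    rw [Set.diff_singleton_eq_self hz] at hodd
    exact (Nat.not_odd_iff_even.mpr hT) hodd
  · intro hz
    have := Set.ncard_diff_singleton_add_one hz (Set.toFinite _)
    rw [Nat.even_iff] at hT
    rw [Nat.odd_iff]
    omega
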